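/- arXiv:1402.3072 — 9 statements merged into one kernel-verified Lean document; each statement's English description precedes it below -/
import Mathlib

section
/- For all real numbers p, q with 0 < q ≤ p < 1, the minimum of the two Kullback–Leibler divergences satisfies min{KL(q,p), KL(p,q)} ≥ (p−q)²/(2(p+q)). -/
/-- Kullback–Leibler divergence between Bernoulli(a) and Bernoulli(b). -/
noncomputable def KL (a b : ℝ) : ℝ :=
  a * Real.log (a / b) + (1 - a) * Real.log ((1 - a) / (1 - b))

lemma term_ge (a b : ℝ) (ha : 0 < a) (hb : 0 < b) :
    2 * a - 2 * Real.sqrt a * Real.sqrt b ≤ a * Real.log (a / b) := by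
  have hsa : 0 < Real.sqrt a := Real.sqrt_pos.2 ha
  have hsb : 0 < Real.sqrt b := Real.sqrt_pos.2 hb
  have h1 : Real.log (Real.sqrt b / Real.sqrt a) ≤ Real.sqrt b / Real.sqrt a - 1 :=
    Real.log_le_sub_one_of_pos (by positivity)
  have h2 : Real.log (Real.sqrt b / Real.sqrt a) = Real.log b / 2 - Real.log a / 2 := by
    rw [Real.log_div (ne_of_gt hsb) (ne_of_gt hsa), Real.log_sqrt hb.le, Real.log_sqrt ha.le]
  have h3 : Real.log (a / b) = Real.log a - Real.log b :=
    Real.log_div (ne_of_gt ha) (ne_of_gt hb)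
  have h4 : 2 - 2 * (Real.sqrt b / Real.sqrt a) ≤ Real.log (a / b) := by
    rw [h3]; nlinarith [h1, h2]
  have h5 : a * (2 - 2 * (Real.sqrt b / Real.sqrt a)) ≤ a * Real.log (a / b) :=
    mul_le_mul_of_nonneg_left h4 ha.le
  have h6 : a * (Real.sqrt b / Real.sqrt a) = Real.sqrt a * Real.sqrt b := by
    field_simp
    nlinarith [Real.sq_sqrt ha.le]
  nlinarith [h5, h6]

lemma KL_ge (a b : ℝ) (ha0 : 0 < a) (ha1 : a < 1) (hb0 : 0 < b) (hb1 : b < 1) :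
    2 - 2 * Real.sqrt a * Real.sqrt b
      - 2 * Real.sqrt (1 - a) * Real.sqrt (1 - b) ≤ KL a b := by
  have h1 := term_ge a b ha0 hb0
  have h2 := term_ge (1 - a) (1 - b) (by linarith) (by linarith)
  unfold KL
  linarith

theorem min_KL_ge (p q : ℝ) (hq : 0 < q) (hqp : q ≤ p) (hp : p < 1) :
    min (KL q p) (KL p q) ≥ (p - q) ^ 2 / (2 * (p + q)) := by
  have hp0 : 0 < p := lt_of_lt_of_le hq hqp
  have hq1 : q < 1 := lt_of_le_of_lt hqp hp
  set sp := Real.sqrt p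
  set sq := Real.sqrt q
  set sp1 := Real.sqrt (1 - p)
  set sq1 := Real.sqrt (1 - q)
  have hsp : sp ^ 2 = p := Real.sq_sqrt hp0.le
  have hsq : sq ^ 2 = q := Real.sq_sqrt hq.le
  have hsp1 : sp1 ^ 2 = 1 - p := Real.sq_sqrt (by linarith)
  have hsq1 : sq1 ^ 2 = 1 - q := Real.sq_sqrt (by linarith)
  have hspn : 0 ≤ sp := Real.sqrt_nonneg _
  have hsqn : 0 ≤ sq := Real.sqrt_nonneg _
  have hsp1n : 0 ≤ sp1 := Real.sqrt_nonneg _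
  have hsq1n : 0 ≤ sq1 := Real.sqrt_nonneg _
  have h1 := KL_ge q p hq hq1 hp0 hp
  have h2 := KL_ge p q hp0 hp hq hq1
  have hL : (p - q) ^ 2 / (2 * (p + q)) ≤ 2 - 2 * sp * sq - 2 * sp1 * sq1 := by
    rw [div_le_iff₀ (by positivity)]
    nlinarith [sq_nonneg (sp - sq), sq_nonneg (sp1 - sq1),
      mul_nonneg (sq_nonneg (sp - sq)) (sq_nonneg (sp - sq)),
      mul_nonneg (mul_nonneg hspn hsqn) (sq_nonneg (sp - sq)),
      mul_nonneg (sq_nonneg (sp1 - sq1)) (by positivity : (0:ℝ) ≤ 2 * (p + q))]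
  rw [ge_iff_le, le_min_iff]
  constructor
  · calc (p - q) ^ 2 / (2 * (p + q)) ≤ 2 - 2 * sp * sq - 2 * sp1 * sq1 := hL
      _ = 2 - 2 * sq * sp - 2 * sq1 * sp1 := by ring
      _ ≤ KL q p := h1
  · linarith [hL, h2]
end

section
/- For all real numbers p, q ∈ (0,1), KL(p,q) ≥ KL(q,p) holds if and only if p(1−p) ≥ q(1−q). -/
lemma two_log_lt (x : ℝ) (hx : 1 < x) : 2 * Real.log x < x - 1/x := by
  have h0 : (0:ℝ) < 1 := one_pos
  have key : StrictMonoOn (fun y : ℝ => y - 1/y - 2 * Real.log y) (Set.Ici 1) := by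
    apply strictMonoOn_of_deriv_pos (convex_Ici 1)
    · apply ContinuousOn.sub
      apply ContinuousOn.sub continuousOn_id
      · exact continuousOn_const.div continuousOn_id (fun y hy => by
          have : (1:ℝ) ≤ y := hy
          positivity)
      · exact (continuousOn_const.mul (Real.continuousOn_log.mono (fun y hy => by
          simp only [Set.mem_compl_iff, Set.mem_singleton_iff]
          have : (1:ℝ) ≤ y := hy
          intro h; rw [h] at this; linarith)))
    · intro y hy
      rw [interior_Ici] at hy
      have hy1 : (1:ℝ) < y := hy
      have hy0 : (0:ℝ) < y := by linarith
      have hd : HasDerivAt (fun y : ℝ => y - 1/y - 2 * Real.log y)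
          (1 - (-(1 / y^2)) - 2 * (1/y)) y := by
        have h1 : HasDerivAt (fun y : ℝ => 1/y) (-(1/y^2)) y := by
          simpa using (hasDerivAt_inv (ne_of_gt hy0))
        have h2 : HasDerivAt Real.log (1/y) y := by
          simpa using Real.hasDerivAt_log (ne_of_gt hy0)
        exact ((hasDerivAt_id y).sub h1).sub ((h2.const_mul 2))
      rw [hd.deriv]
      have : 1 - (-(1 / y^2)) - 2 * (1/y) = ((y-1)/y)^2 := by field_simp; ring
      rw [this]
      have : (0:ℝ) < (y-1)/y := div_pos (by linarith) hy0
      positivity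
  have h1 : (1:ℝ) ∈ Set.Ici (1:ℝ) := Set.mem_Ici.mpr le_rfl
  have hx1 : x ∈ Set.Ici (1:ℝ) := le_of_lt hx
  have := key h1 hx1 hx
  simp only [Real.log_one, mul_zero, one_div] at this
  rw [one_div]
  linarith

noncomputable def psi (r : ℝ) : ℝ := (r + 1) * Real.log r / (r - 1)

lemma psi_mono : StrictMonoOn psi (Set.Ioi 1) := by
  apply strictMonoOn_of_deriv_pos (convex_Ioi 1)
  · apply ContinuousOn.div
    · exact (continuousOn_id.add continuousOn_const).mul
        (Real.continuousOn_log.mono (fun y hy => by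
          simp only [Set.mem_compl_iff, Set.mem_singleton_iff]
          have : (1:ℝ) < y := hy
          intro h; rw [h] at this; linarith))
    · exact continuousOn_id.sub continuousOn_const
    · intro y hy
      have : (1:ℝ) < y := hy
      intro h
      have : y = 1 := by linarith [sub_eq_zero.mp h]
      linarith
  · intro y hy
    rw [interior_Ioi] at hy
    have hy1 : (1:ℝ) < y := hy
    have hy0 : (0:ℝ) < y := by linarith
    have hne : y - 1 ≠ 0 := by intro h; nlinarith [sub_eq_zero.mp h]
    have hd : HasDerivAt psi
        (((1 * Real.log y + (y+1) * (1/y)) * (y-1) - (y+1) * Real.log y * 1) / (y-1)^2) y := by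
      have hn : HasDerivAt (fun r : ℝ => (r + 1) * Real.log r)
          (1 * Real.log y + (y+1) * (1/y)) y := by
        have h2 : HasDerivAt Real.log (1/y) y := by
          simpa using Real.hasDerivAt_log (ne_of_gt hy0)
        exact ((hasDerivAt_id y).add_const 1).mul h2
      have hdd : HasDerivAt (fun r : ℝ => r - 1) 1 y := (hasDerivAt_id y).sub_const 1
      exact hn.div hdd hne
    rw [hd.deriv]
    have hkey : 2 * Real.log y < y - 1/y := two_log_lt y hy1
    have heq : (1 * Real.log y + (y+1) * (1/y)) * (y-1) - (y+1) * Real.log y * 1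
        = y - 1/y - 2 * Real.log y := by
      field_simp
      ring
    rw [heq]
    apply div_pos (by linarith)
    have : (0:ℝ) < y - 1 := by linarith
    positivity

lemma KL_diff (p q : ℝ) (hp0 : 0 < p) (hp1 : p < 1) (hq0 : 0 < q) (hq1 : q < 1)
    (hne : p ≠ q) :
    KL p q - KL q p = (p - q) * (psi (p/q) - psi ((1-q)/(1-p))) := by
  have h1p : (0:ℝ) < 1 - p := by linarith
  have h1q : (0:ℝ) < 1 - q := by linarith
  have hd1 : p/q - 1 ≠ 0 := by
    rw [div_sub_one hq0.ne', div_ne_zero_iff]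
    exact ⟨sub_ne_zero.mpr hne, hq0.ne'⟩
  have hd2 : (1-q)/(1-p) - 1 ≠ 0 := by
    rw [div_sub_one h1p.ne', div_ne_zero_iff]
    constructor
    · intro h; apply hne; linarith [sub_eq_zero.mp h]
    · exact h1p.ne'
  have hpq : p - q ≠ 0 := sub_ne_zero.mpr hne
  have hqp : q - p ≠ 0 := sub_ne_zero.mpr (Ne.symm hne)
  unfold KL psi
  rw [Real.log_div hp0.ne' hq0.ne', Real.log_div hq0.ne' hp0.ne',
      Real.log_div h1p.ne' h1q.ne', Real.log_div h1q.ne' h1p.ne']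
  rw [show p/q - 1 = (p-q)/q by field_simp, show (1-q)/(1-p) - 1 = (p-q)/(1-p) by field_simp; ring]
  field_simp
  ring

theorem KL_ge_iff (p q : ℝ) (hp0 : 0 < p) (hp1 : p < 1) (hq0 : 0 < q) (hq1 : q < 1) :
    KL p q ≥ KL q p ↔ p * (1 - p) ≥ q * (1 - q) := by
  have h1p : (0:ℝ) < 1 - p := by linarith
  have h1q : (0:ℝ) < 1 - q := by linarith
  rcases lt_trichotomy p q with hlt | heq | hgt
  · -- p < q : swap roles
    have hne : q ≠ p := ne_of_gt hlt
    have hident := KL_diff q p hq0 hq1 hp0 hp1 hne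
    have hr1 : q/p ∈ Set.Ioi (1:ℝ) := Set.mem_Ioi.mpr ((one_lt_div hp0).mpr hlt)
    have hr2 : (1-p)/(1-q) ∈ Set.Ioi (1:ℝ) := Set.mem_Ioi.mpr ((one_lt_div h1q).mpr (by linarith))
    have hiff1 : KL p q ≥ KL q p ↔ psi (q/p) ≤ psi ((1-p)/(1-q)) := by
      constructor
      · intro h
        have h2 : (q - p) * (psi (q/p) - psi ((1-p)/(1-q))) ≤ 0 := by linarith
        by_contra hc
        push_neg at hc
        nlinarith [mul_pos (sub_pos.mpr hlt) (sub_pos.mpr hc)]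
      · intro h
        nlinarith [mul_nonpos_of_nonneg_of_nonpos (le_of_lt (sub_pos.mpr hlt)) (sub_nonpos.mpr h)]
    rw [hiff1, psi_mono.le_iff_le hr1 hr2, div_le_div_iff₀ hp0 h1q]
    constructor <;> intro h <;> nlinarith
  · subst heq; simp
  · -- q < p
    have hne : p ≠ q := ne_of_gt hgt
    have hident := KL_diff p q hp0 hp1 hq0 hq1 hne
    have hr1 : p/q ∈ Set.Ioi (1:ℝ) := Set.mem_Ioi.mpr ((one_lt_div hq0).mpr hgt)
    have hr2 : (1-q)/(1-p) ∈ Set.Ioi (1:ℝ) := Set.mem_Ioi.mpr ((one_lt_div h1p).mpr (by linarith))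
    have hiff1 : KL p q ≥ KL q p ↔ psi ((1-q)/(1-p)) ≤ psi (p/q) := by
      constructor
      · intro h
        have h2 : 0 ≤ (p - q) * (psi (p/q) - psi ((1-q)/(1-p))) := by linarith
        by_contra hc
        push_neg at hc
        nlinarith [mul_pos (sub_pos.mpr hgt) (sub_pos.mpr hc)]
      · intro h
        nlinarith [mul_nonneg (le_of_lt (sub_pos.mpr hgt)) (sub_nonneg.mpr h)]
    rw [hiff1, psi_mono.le_iff_le hr2 hr1, div_le_div_iff₀ h1p hq0]
    constructor <;> intro h <;> nlinarith
end

section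
/- For every real number c with −1/2 < c < 1/2, one has −(1+c)·log(1+2c) − (1−c)·log(1−2c) ≥ 0. -/
lemma log_le_half_sub_inv {t : ℝ} (ht : 1 ≤ t) : Real.log t ≤ (t - 1/t) / 2 := by
  have h0 : (0:ℝ) < t := lt_of_lt_of_le one_pos ht
  have hu : 0 ≤ Real.log t := Real.log_nonneg ht
  have hsinh : Real.log t ≤ Real.sinh (Real.log t) := Real.self_le_sinh_iff.mpr hu
  rwa [Real.sinh_eq, Real.exp_log h0, Real.exp_neg, Real.exp_log h0,
    ← one_div] at hsinh

lemma hasDerivF (y : ℝ) (hy1 : -(1/2) < y) (hy2 : y < 1/2) :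
    HasDerivAt (fun z : ℝ => (1 + z) * Real.log (1 + 2*z) + (1 - z) * Real.log (1 - 2*z))
      (Real.log (1 + 2*y) + (1 + y) * (2 / (1 + 2*y))
        + (-(Real.log (1 - 2*y)) + (1 - y) * (-2 / (1 - 2*y)))) y := by
  have hp : (1:ℝ) + 2*y ≠ 0 := by nlinarith
  have hq : (1:ℝ) - 2*y ≠ 0 := by nlinarith
  have d1 : HasDerivAt (fun z : ℝ => 1 + 2*z) 2 y := by
    simpa using (hasDerivAt_id y).const_mul 2 |>.const_add 1
  have d2 : HasDerivAt (fun z : ℝ => 1 - 2*z) (-2) y := by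
    simpa using ((hasDerivAt_id y).const_mul 2).const_sub 1
  have dl1 : HasDerivAt (fun z : ℝ => Real.log (1 + 2*z)) (2 / (1 + 2*y)) y := d1.log hp
  have dl2 : HasDerivAt (fun z : ℝ => Real.log (1 - 2*z)) (-2 / (1 - 2*y)) y := d2.log hq
  have da : HasDerivAt (fun z : ℝ => 1 + z) 1 y := by
    simpa using (hasDerivAt_id y).const_add 1
  have db : HasDerivAt (fun z : ℝ => 1 - z) (-1) y := by
    simpa using (hasDerivAt_id y).const_sub 1
  have h1 : HasDerivAt (fun z : ℝ => (1 + z) * Real.log (1 + 2*z))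
      (1 * Real.log (1 + 2*y) + (1 + y) * (2 / (1 + 2*y))) y := da.mul dl1
  have h2 : HasDerivAt (fun z : ℝ => (1 - z) * Real.log (1 - 2*z))
      ((-1) * Real.log (1 - 2*y) + (1 - y) * (-2 / (1 - 2*y))) y := db.mul dl2
  have := h1.add h2
  exact this.congr_deriv (by ring)

lemma aux_nonpos (c : ℝ) (h1 : 0 ≤ c) (h2 : c < 1/2) :
    (1 + c) * Real.log (1 + 2*c) + (1 - c) * Real.log (1 - 2*c) ≤ 0 := by
  set F : ℝ → ℝ := fun z => (1 + z) * Real.log (1 + 2*z) + (1 - z) * Real.log (1 - 2*z)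
    with hF
  have hsub : Set.Icc (0:ℝ) c ⊆ Set.Ioo (-(1/2):ℝ) (1/2) := by
    intro y hy
    exact ⟨by linarith [hy.1], by linarith [hy.2]⟩
  have hanti : AntitoneOn F (Set.Icc (0:ℝ) c) := by
    apply antitoneOn_of_deriv_nonpos (convex_Icc 0 c)
    · intro y hy
      obtain ⟨hy1, hy2⟩ := hsub hy
      exact (hasDerivF y hy1 hy2).continuousAt.continuousWithinAt
    · intro y hy
      rw [interior_Icc] at hy
      obtain ⟨hy1, hy2⟩ := hsub (Set.Ioo_subset_Icc_self hy)
      exact (hasDerivF y hy1 hy2).differentiableAt.differentiableWithinAt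
    · intro y hy
      rw [interior_Icc] at hy
      have hy1 : -(1/2:ℝ) < y := by linarith [hy.1]
      have hy2 : y < 1/2 := by linarith [hy.2]
      have hy0 : 0 < y := hy.1
      rw [(hasDerivF y hy1 hy2).deriv]
      have hp : (0:ℝ) < 1 + 2*y := by linarith
      have hq : (0:ℝ) < 1 - 2*y := by linarith
      -- log((1+2y)/(1-2y)) ≤ (r - 1/r)/2 = 4y/(1-4y²)
      have hr1 : (1:ℝ) ≤ (1 + 2*y) / (1 - 2*y) := by
        rw [le_div_iff₀ hq]; linarith
      have hkey := log_le_half_sub_inv hr1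
      rw [Real.log_div hp.ne' hq.ne'] at hkey
      have hrw : ((1 + 2*y) / (1 - 2*y) - 1 / ((1 + 2*y) / (1 - 2*y))) / 2
          = 4*y / ((1 + 2*y) * (1 - 2*y)) := by
        field_simp
        ring
      rw [hrw] at hkey
      have hrw2 : (1 + y) * (2 / (1 + 2*y)) + (1 - y) * (-2 / (1 - 2*y))
          = -(4*y / ((1 + 2*y) * (1 - 2*y))) := by
        rw [mul_div_assoc', mul_div_assoc', div_add_div _ _ hp.ne' hq.ne', ← neg_div,
          div_eq_div_iff (mul_pos hp hq).ne' (mul_pos hp hq).ne']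
        ring
      linarith [hrw2 ▸ (le_refl ((1 + y) * (2 / (1 + 2*y)) + (1 - y) * (-2 / (1 - 2*y))))]
  have h0mem : (0:ℝ) ∈ Set.Icc (0:ℝ) c := ⟨le_refl 0, h1⟩
  have hcmem : c ∈ Set.Icc (0:ℝ) c := ⟨h1, le_refl c⟩
  have hle : F c ≤ F 0 := hanti h0mem hcmem h1
  have hF0 : F 0 = 0 := by simp [hF]
  rw [hF0] at hle
  exact hle

theorem neg_log_combination_nonneg (c : ℝ) (h1 : -(1/2) < c) (h2 : c < 1/2) :
    -(1 + c) * Real.log (1 + 2*c) - (1 - c) * Real.log (1 - 2*c) ≥ 0 := by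
  rcases le_or_gt 0 c with hc | hc
  · have := aux_nonpos c hc h2
    linarith
  · have h := aux_nonpos (-c) (by linarith) (by linarith)
    have e1 : (1:ℝ) + 2*(-c) = 1 - 2*c := by ring
    have e2 : (1:ℝ) - 2*(-c) = 1 + 2*c := by ring
    rw [e1, e2] at h
    linarith
end

section
/- There exists a constant C > 1 such that for all real numbers p, q ∈ (0,1) with q < p, KL(p,q) ≥ KL(q,p), and p ≥ C·q, one has KL(p,q) ≥ (p/3)·log(p(1−q)/(q(1−p))). -/
theorem exists_C_KL_lower_bound :
    ∃ C : ℝ, C > 1 ∧ ∀ p q : ℝ, 0 < p → p < 1 → 0 < q → q < 1 → q < p →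
      KL p q ≥ KL q p → p ≥ C * q →
      KL p q ≥ (p / 3) * Real.log (p * (1 - q) / (q * (1 - p))) := by
  refine ⟨3, by norm_num, fun p q hp hp1 hq hq1 hqp hsym hC => ?_⟩
  have h1p : (0:ℝ) < 1 - p := by linarith
  have h1q : (0:ℝ) < 1 - q := by linarith
  set L := Real.log (p * (1 - q) / (q * (1 - p))) with hL
  have hLnn : 0 ≤ L := by
    apply Real.log_nonneg
    rw [le_div_iff₀ (by positivity)]
    nlinarith
  have hsum : KL p q + KL q p = (p - q) * L := by
    simp only [KL, hL]
    rw [show p * (1-q) / (q * (1-p)) = (p/q) * ((1-q)/(1-p)) by rw [div_mul_div_comm],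
        Real.log_mul (by positivity) (by positivity),
        Real.log_div (by positivity) (by positivity),
        Real.log_div (by positivity) (by positivity),
        Real.log_div (by positivity) (by positivity),
        Real.log_div (by positivity) (by positivity)]
    ring
  have h2 : 2 * KL p q ≥ (p - q) * L := by
    rw [← hsum]; linarith
  have hpq : p - q ≥ 2 / 3 * p := by linarith
  nlinarith [mul_le_mul_of_nonneg_right hpq hLnn]
end

section
/- For all real numbers p, q ∈ (0,1) with q < p, p(1−p) ≥ q(1−q), and p ≥ 5/6, one has KL(p,q) ≥ (p − 1/2)·log(p(1−q)/(q(1−p))), and in particular KL(p,q) ≥ (p/3)·log(p(1−q)/(q(1−p))). -/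
theorem KL_lower_bound_of_large_p (p q : ℝ) (hp0 : 0 < p) (hp1 : p < 1)
    (hq0 : 0 < q) (hq1 : q < 1) (hqp : q < p)
    (hvar : p * (1 - p) ≥ q * (1 - q)) (hp56 : p ≥ 5/6) :
    KL p q ≥ (p - 1/2) * Real.log (p * (1 - q) / (q * (1 - p))) ∧
    KL p q ≥ (p / 3) * Real.log (p * (1 - q) / (q * (1 - p))) := by
  have h1p : (0:ℝ) < 1 - p := by linarith
  have h1q : (0:ℝ) < 1 - q := by linarith
  have hRnum : 0 < p * (1 - q) := mul_pos hp0 h1q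
  have hRden : 0 < q * (1 - p) := mul_pos hq0 h1p
  have hlogR : Real.log (p * (1 - q) / (q * (1 - p))) =
      Real.log p + Real.log (1 - q) - (Real.log q + Real.log (1 - p)) := by
    rw [Real.log_div (ne_of_gt hRnum) (ne_of_gt hRden),
      Real.log_mul (ne_of_gt hp0) (ne_of_gt h1q),
      Real.log_mul (ne_of_gt hq0) (ne_of_gt h1p)]
  have hKL : KL p q = p * (Real.log p - Real.log q) +
      (1 - p) * (Real.log (1 - p) - Real.log (1 - q)) := by
    unfold KL
    rw [Real.log_div (ne_of_gt hp0) (ne_of_gt hq0),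
      Real.log_div (ne_of_gt h1p) (ne_of_gt h1q)]
  have hvarlog : Real.log p + Real.log (1 - p) ≥ Real.log q + Real.log (1 - q) := by
    rw [← Real.log_mul (ne_of_gt hp0) (ne_of_gt h1p),
      ← Real.log_mul (ne_of_gt hq0) (ne_of_gt h1q)]
    exact Real.log_le_log (mul_pos hq0 h1q) hvar
  have hmain : KL p q ≥ (p - 1/2) * Real.log (p * (1 - q) / (q * (1 - p))) := by
    rw [hKL, hlogR]; nlinarith [hvarlog]
  refine ⟨hmain, ?_⟩
  have hRge : Real.log (p * (1 - q) / (q * (1 - p))) ≥ 0 := by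
    apply Real.log_nonneg
    rw [le_div_iff₀ hRden]
    nlinarith
  have hcoef : p / 3 ≤ p - 1/2 := by linarith
  calc KL p q ≥ (p - 1/2) * Real.log (p * (1 - q) / (q * (1 - p))) := hmain
    _ ≥ (p / 3) * Real.log (p * (1 - q) / (q * (1 - p))) :=
        mul_le_mul_of_nonneg_right hcoef hRge
end

section
/- For all real numbers p, q with 0 < q ≤ p < 1, the minimum of the two Kullback–Leibler divergences satisfies min{KL(q,p), KL(p,q)} ≥ (p−q)²/(2(2−p−q)). -/
private lemma aux_mono (a c : ℝ) (q p : ℝ) (hq : 0 < q) (hqp : q ≤ p) (hp : p < 1)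
    (ha0 : 0 < a) (ha1 : a < 1) (hc : 1 - q ≤ c)
    (hsign : ∀ x ∈ Set.Ioo q p, 0 ≤ x - a) :
    MonotoneOn (fun x : ℝ =>
      a * (Real.log a - Real.log x) + (1 - a) * (Real.log (1 - a) - Real.log (1 - x))
        - (x - a) ^ 2 / (2 * c)) (Set.Icc q p) := by
  have hc0 : (0:ℝ) < c := lt_of_lt_of_le (by linarith) hc
  apply monotoneOn_of_hasDerivWithinAt_nonneg (f' := fun x =>
      (x - a) * ((x * (1 - x))⁻¹ - c⁻¹)) (convex_Icc q p)
  · -- continuity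
    apply continuousOn_of_forall_continuousAt
    intro x hx
    have hx0 : 0 < x := lt_of_lt_of_le hq hx.1
    have hx1 : x < 1 := lt_of_le_of_lt hx.2 hp
    have c1 : ContinuousAt Real.log x := Real.continuousAt_log (ne_of_gt hx0)
    have c2 : ContinuousAt (fun y : ℝ => Real.log (1 - y)) x :=
      (Real.continuousAt_log (by intro h; nlinarith)).comp (by fun_prop)
    exact ((continuousAt_const.mul (continuousAt_const.sub c1)).add
      (continuousAt_const.mul (continuousAt_const.sub c2))).sub (by fun_prop)
  · intro x hx
    rw [interior_Icc] at hx
    have hx0 : 0 < x := lt_trans hq hx.1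
    have hx1 : x < 1 := lt_trans hx.2 hp
    have h1 : HasDerivAt (fun y : ℝ => Real.log y) x⁻¹ x := Real.hasDerivAt_log (ne_of_gt hx0)
    have h2 : HasDerivAt (fun y : ℝ => Real.log (1 - y)) (-(1 - x)⁻¹) x := by
      have := (Real.hasDerivAt_log (x := 1 - x) (by intro h; nlinarith)).comp x
        ((hasDerivAt_const x (1:ℝ)).sub (hasDerivAt_id x))
      simpa [Function.comp_def] using this
    have h3 : HasDerivAt (fun y : ℝ => (y - a) ^ 2 / (2 * c)) (2 * (x - a) / (2 * c)) x := by
      have := (((hasDerivAt_id x).sub_const a).pow 2).div_const (2 * c)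
      simpa using this
    have H := ((((hasDerivAt_const x (Real.log a)).sub h1).const_mul a).add
        (((hasDerivAt_const x (Real.log (1 - a))).sub h2).const_mul (1 - a))).sub h3
    have Heq : a * (0 - x⁻¹) + (1 - a) * (0 - -(1 - x)⁻¹) - 2 * (x - a) / (2 * c)
        = (x - a) * ((x * (1 - x))⁻¹ - c⁻¹) := by
      have hxne : x ≠ 0 := ne_of_gt hx0
      have h1x : (1 : ℝ) - x ≠ 0 := by intro h; nlinarith
      have hcne : c ≠ 0 := ne_of_gt hc0
      field_simp
      ring
    rw [Heq] at H
    exact H.hasDerivWithinAt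
  · intro x hx
    rw [interior_Icc] at hx
    have hx0 : 0 < x := lt_trans hq hx.1
    have hx1 : x < 1 := lt_trans hx.2 hp
    have hxx : 0 < x * (1 - x) := by nlinarith
    have hle : x * (1 - x) ≤ c := by nlinarith [hx.1]
    have : c⁻¹ ≤ (x * (1 - x))⁻¹ := by
      apply inv_anti₀ hxx hle
    exact mul_nonneg (hsign x hx) (by linarith)

private lemma aux_anti (a c : ℝ) (q p : ℝ) (hq : 0 < q) (hqp : q ≤ p) (hp : p < 1)
    (ha0 : 0 < a) (ha1 : a < 1) (hc : 1 - q ≤ c)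
    (hsign : ∀ x ∈ Set.Ioo q p, x - a ≤ 0) :
    AntitoneOn (fun x : ℝ =>
      a * (Real.log a - Real.log x) + (1 - a) * (Real.log (1 - a) - Real.log (1 - x))
        - (x - a) ^ 2 / (2 * c)) (Set.Icc q p) := by
  have hc0 : (0:ℝ) < c := lt_of_lt_of_le (by linarith) hc
  apply antitoneOn_of_hasDerivWithinAt_nonpos (f' := fun x =>
      (x - a) * ((x * (1 - x))⁻¹ - c⁻¹)) (convex_Icc q p)
  · -- continuity
    apply continuousOn_of_forall_continuousAt
    intro x hx
    have hx0 : 0 < x := lt_of_lt_of_le hq hx.1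
    have hx1 : x < 1 := lt_of_le_of_lt hx.2 hp
    have c1 : ContinuousAt Real.log x := Real.continuousAt_log (ne_of_gt hx0)
    have c2 : ContinuousAt (fun y : ℝ => Real.log (1 - y)) x :=
      (Real.continuousAt_log (by intro h; nlinarith)).comp (by fun_prop)
    exact ((continuousAt_const.mul (continuousAt_const.sub c1)).add
      (continuousAt_const.mul (continuousAt_const.sub c2))).sub (by fun_prop)
  · intro x hx
    rw [interior_Icc] at hx
    have hx0 : 0 < x := lt_trans hq hx.1
    have hx1 : x < 1 := lt_trans hx.2 hp
    have h1 : HasDerivAt (fun y : ℝ => Real.log y) x⁻¹ x := Real.hasDerivAt_log (ne_of_gt hx0)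
    have h2 : HasDerivAt (fun y : ℝ => Real.log (1 - y)) (-(1 - x)⁻¹) x := by
      have := (Real.hasDerivAt_log (x := 1 - x) (by intro h; nlinarith)).comp x
        ((hasDerivAt_const x (1:ℝ)).sub (hasDerivAt_id x))
      simpa [Function.comp_def] using this
    have h3 : HasDerivAt (fun y : ℝ => (y - a) ^ 2 / (2 * c)) (2 * (x - a) / (2 * c)) x := by
      have := (((hasDerivAt_id x).sub_const a).pow 2).div_const (2 * c)
      simpa using this
    have H := ((((hasDerivAt_const x (Real.log a)).sub h1).const_mul a).add
        (((hasDerivAt_const x (Real.log (1 - a))).sub h2).const_mul (1 - a))).sub h3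
    have Heq : a * (0 - x⁻¹) + (1 - a) * (0 - -(1 - x)⁻¹) - 2 * (x - a) / (2 * c)
        = (x - a) * ((x * (1 - x))⁻¹ - c⁻¹) := by
      have hxne : x ≠ 0 := ne_of_gt hx0
      have h1x : (1 : ℝ) - x ≠ 0 := by intro h; nlinarith
      have hcne : c ≠ 0 := ne_of_gt hc0
      field_simp
      ring
    rw [Heq] at H
    exact H.hasDerivWithinAt
  · intro x hx
    rw [interior_Icc] at hx
    have hx0 : 0 < x := lt_trans hq hx.1
    have hx1 : x < 1 := lt_trans hx.2 hp
    have hxx : 0 < x * (1 - x) := by nlinarith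
    have hle : x * (1 - x) ≤ c := by nlinarith [hx.1]
    have : c⁻¹ ≤ (x * (1 - x))⁻¹ := by
      apply inv_anti₀ hxx hle
    exact mul_nonpos_of_nonpos_of_nonneg (hsign x hx) (by linarith)

theorem min_KL_ge' (p q : ℝ) (hq : 0 < q) (hqp : q ≤ p) (hp : p < 1) :
    min (KL q p) (KL p q) ≥ (p - q) ^ 2 / (2 * (2 - p - q)) := by
  have hq1 : q < 1 := lt_of_le_of_lt hqp hp
  have hp0 : 0 < p := lt_of_lt_of_le hq hqp
  have key : (p - q) ^ 2 / (2 * (1 - q)) ≤ min (KL q p) (KL p q) := by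
    apply le_min
    · -- KL q p
      have hm := aux_mono q (1 - q) q p hq hqp hp hq hq1 le_rfl
        (fun x hx => by linarith [hx.1])
      have := hm (Set.left_mem_Icc.2 hqp) (Set.right_mem_Icc.2 hqp) hqp
      simp only [sub_self] at this
      norm_num at this
      have hKL : KL q p = q * (Real.log q - Real.log p)
          + (1 - q) * (Real.log (1 - q) - Real.log (1 - p)) := by
        rw [KL, Real.log_div (ne_of_gt hq) (ne_of_gt hp0),
          Real.log_div (by linarith) (by linarith)]
      rw [hKL]
      linarith [this]
    · -- KL p q
      have hm := aux_anti p (1 - q) q p hq hqp hp hp0 hp le_rfl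
        (fun x hx => by linarith [hx.2])
      have := hm (Set.left_mem_Icc.2 hqp) (Set.right_mem_Icc.2 hqp) hqp
      simp only [sub_self] at this
      norm_num at this
      have hKL : KL p q = p * (Real.log p - Real.log q)
          + (1 - p) * (Real.log (1 - p) - Real.log (1 - q)) := by
        rw [KL, Real.log_div (ne_of_gt hp0) (ne_of_gt hq),
          Real.log_div (by linarith) (by linarith)]
      rw [hKL]
      have hsq : (q - p) ^ 2 = (p - q) ^ 2 := by ring
      rw [hsq] at this
      exact this
  have hmono : (p - q) ^ 2 / (2 * (2 - p - q)) ≤ (p - q) ^ 2 / (2 * (1 - q)) := by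
    apply div_le_div_of_nonneg_left (by positivity) (by linarith) (by linarith)
  exact le_trans hmono key
end

section
/- Let n be a natural number, 0 < q < p < 1, let X₁, …, Xₙ be i.i.d. Bernoulli(p) and Y₁, …, Yₙ be i.i.d. Bernoulli(q), with all of X₁, …, Xₙ, Y₁, …, Yₙ mutually independent. Then for every real a > 0, P(Σᵢ Xᵢ − Σᵢ Yᵢ ≤ −a) ≤ exp(−a·log(p(1−q)/(q(1−p)))). -/
open MeasureTheory ProbabilityTheory Real

lemma bernoulli_exp_eq {Ω : Type*} [MeasureSpace Ω] (W : Ω → ℝ)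
    (h01 : ∀ ω, W ω = 0 ∨ W ω = 1) (s : ℝ) :
    (fun ω => exp (s * W ω)) = fun ω => (exp s - 1) * W ω + 1 := by
  funext ω
  rcases h01 ω with h | h <;> simp [h]

lemma bernoulli_integrable {Ω : Type*} [MeasureSpace Ω] [IsProbabilityMeasure (ℙ : Measure Ω)]
    (W : Ω → ℝ) (hm : Measurable W) (h01 : ∀ ω, W ω = 0 ∨ W ω = 1) :
    Integrable W ℙ := by
  refine (integrable_const (1 : ℝ)).mono' hm.aestronglyMeasurable ?_
  refine Filter.Eventually.of_forall fun ω => ?_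
  rcases h01 ω with h | h <;> simp [h]

lemma bernoulli_integral {Ω : Type*} [MeasureSpace Ω] [IsProbabilityMeasure (ℙ : Measure Ω)]
    (W : Ω → ℝ) (hm : Measurable W) (h01 : ∀ ω, W ω = 0 ∨ W ω = 1)
    {c : ℝ} (hc : 0 ≤ c) (hW : ℙ {ω | W ω = 1} = ENNReal.ofReal c) :
    ∫ ω, W ω = c := by
  have hset : MeasurableSet {ω | W ω = 1} := hm (measurableSet_singleton 1)
  have hind : W = Set.indicator {ω | W ω = 1} (1 : Ω → ℝ) := by
    funext ω
    rcases h01 ω with h | h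
    · simp [Set.indicator, h]
    · simp [Set.indicator, h]
  rw [hind, integral_indicator_one hset, measureReal_def, hW, ENNReal.toReal_ofReal hc]

lemma bernoulli_mgf {Ω : Type*} [MeasureSpace Ω] [IsProbabilityMeasure (ℙ : Measure Ω)]
    (W : Ω → ℝ) (hm : Measurable W) (h01 : ∀ ω, W ω = 0 ∨ W ω = 1)
    {c : ℝ} (hc : 0 ≤ c) (hW : ℙ {ω | W ω = 1} = ENNReal.ofReal c) (s : ℝ) :
    mgf W ℙ s = (exp s - 1) * c + 1 := by
  rw [mgf, bernoulli_exp_eq W h01 s]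
  rw [integral_add (((bernoulli_integrable W hm h01).const_mul _)) (integrable_const 1)]
  rw [integral_const_mul, bernoulli_integral W hm h01 hc hW]
  simp

lemma bernoulli_exp_integrable {Ω : Type*} [MeasureSpace Ω] [IsProbabilityMeasure (ℙ : Measure Ω)]
    (W : Ω → ℝ) (hm : Measurable W) (h01 : ∀ ω, W ω = 0 ∨ W ω = 1) (s : ℝ) :
    Integrable (fun ω => exp (s * W ω)) ℙ := by
  rw [bernoulli_exp_eq W h01 s]
  exact ((bernoulli_integrable W hm h01).const_mul _).add (integrable_const 1)

/-- Chernoff-type bound: for mutually independent `X₁,…,Xₙ` i.i.d. Bernoulli(p) and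
`Y₁,…,Yₙ` i.i.d. Bernoulli(q) with `q < p`, for every `a > 0`,
`P(Σ Xᵢ − Σ Yᵢ ≤ −a) ≤ exp(−a·log(p(1−q)/(q(1−p))))`. -/
theorem chernoff_diff_bernoulli
    {Ω : Type*} [MeasureSpace Ω] [IsProbabilityMeasure (ℙ : Measure Ω)]
    (n : ℕ) (p q : ℝ) (hq0 : 0 < q) (hqp : q < p) (hp1 : p < 1)
    (X Y : Fin n → Ω → ℝ)
    (hXm : ∀ i, Measurable (X i)) (hYm : ∀ i, Measurable (Y i))
    (hX01 : ∀ i ω, X i ω = 0 ∨ X i ω = 1) (hY01 : ∀ i ω, Y i ω = 0 ∨ Y i ω = 1)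
    (hXp : ∀ i, ℙ {ω | X i ω = 1} = ENNReal.ofReal p)
    (hYq : ∀ i, ℙ {ω | Y i ω = 1} = ENNReal.ofReal q)
    (hindep : iIndepFun (Sum.elim X Y) ℙ) :
    ∀ a : ℝ, 0 < a →
      ℙ {ω | (∑ i, X i ω) - (∑ i, Y i ω) ≤ -a}
        ≤ ENNReal.ofReal (Real.exp (-a * Real.log (p * (1 - q) / (q * (1 - p))))) := by
  intro a ha
  have hp0 : 0 < p := hq0.trans hqp
  have hq1 : q < 1 := hqp.trans hp1
  set r : ℝ := p * (1 - q) / (q * (1 - p)) with hr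
  have hr_pos : 0 < r :=
    div_pos (mul_pos hp0 (by linarith)) (mul_pos hq0 (by linarith))
  have hr_ge : 1 ≤ r := by
    rw [hr, le_div_iff₀ (mul_pos hq0 (by linarith))]
    nlinarith
  set t : ℝ := -Real.log r with ht
  have ht_le : t ≤ 0 := neg_nonpos.mpr (Real.log_nonneg hr_ge)
  have hexp_t : exp t = r⁻¹ := by rw [ht, Real.exp_neg, Real.exp_log hr_pos]
  have hexp_nt : exp (-t) = r := by rw [ht, neg_neg, Real.exp_log hr_pos]
  -- the family of variables
  set Z : (Fin n ⊕ Fin n) → Ω → ℝ := Sum.elim X (fun i => -(Y i)) with hZ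
  have hZm : ∀ j, Measurable (Z j) := by rintro (i | i); exacts [hXm i, (hYm i).neg]
  have hZindep : iIndepFun Z ℙ := by
    have h := hindep.comp (Sum.elim (fun _ => (id : ℝ → ℝ)) (fun _ => (Neg.neg : ℝ → ℝ)))
      (by rintro (i | i); exacts [measurable_id, measurable_neg])
    have he : (fun j => Sum.elim (fun _ => (id : ℝ → ℝ)) (fun _ => (Neg.neg : ℝ → ℝ)) j
        ∘ Sum.elim X Y j) = Z := by
      funext j; cases j <;> rfl
    rwa [he] at h
  have hsum : (∑ j, Z j) = fun ω => (∑ i, X i ω) - (∑ i, Y i ω) := by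
    funext ω
    simp [hZ, Fintype.sum_sum_type, sub_eq_add_neg, Finset.sum_neg_distrib]
  -- integrability of exponentials
  have hintY : ∀ i : Fin n, Integrable (fun ω => exp (t * (-(Y i)) ω)) ℙ := by
    intro i
    have : (fun ω => exp (t * (-(Y i)) ω)) = fun ω => exp ((-t) * Y i ω) := by
      funext ω; simp [neg_mul]
    rw [this]
    exact bernoulli_exp_integrable (Y i) (hYm i) (hY01 i) (-t)
  have hint : ∀ j ∈ Finset.univ, Integrable (fun ω => exp (t * Z j ω)) ℙ := by
    rintro (i | i) -
    · exact bernoulli_exp_integrable (X i) (hXm i) (hX01 i) t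
    · exact hintY i
  have hintS : Integrable (fun ω => exp (t * (∑ j, Z j) ω)) ℙ :=
    hZindep.integrable_exp_mul_sum hZm hint
  have key := measure_le_le_exp_mul_mgf (μ := ℙ) (X := ∑ j, Z j) (-a) ht_le hintS
  rw [hZindep.mgf_sum hZm] at key
  -- compute the product of mgfs
  have hA : ∀ i : Fin n, mgf (Z (Sum.inl i)) ℙ t = (r⁻¹ - 1) * p + 1 := by
    intro i
    have := bernoulli_mgf (X i) (hXm i) (hX01 i) hp0.le (hXp i) t
    simpa [hZ, hexp_t] using this
  have hB : ∀ i : Fin n, mgf (Z (Sum.inr i)) ℙ t = (r - 1) * q + 1 := by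
    intro i
    have h1 : mgf (Z (Sum.inr i)) ℙ t = mgf (Y i) ℙ (-t) := by
      simp only [hZ, Sum.elim_inr]
      exact mgf_neg
    rw [h1, bernoulli_mgf (Y i) (hYm i) (hY01 i) hq0.le (hYq i) (-t), hexp_nt]
  have hAB : ((r⁻¹ - 1) * p + 1) * ((r - 1) * q + 1) = 1 := by
    have h1 : q * (1 - p) ≠ 0 := (mul_pos hq0 (by linarith)).ne'
    have h2 : p * (1 - q) ≠ 0 := (mul_pos hp0 (by linarith)).ne'
    have h3 : (1 - p) ≠ 0 := by linarith
    have h4 : (1 - q) ≠ 0 := by linarith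
    have h5 : p ≠ 0 := hp0.ne'
    have h6 : q ≠ 0 := hq0.ne'
    rw [hr]
    field_simp
    ring
  have hprod : (∏ j, mgf (Z j) ℙ t) = 1 := by
    rw [Fintype.prod_sum_type]
    simp only [hA, hB, Finset.prod_const, Finset.card_univ, Fintype.card_fin]
    rw [← mul_pow, hAB, one_pow]
  rw [hprod, mul_one] at key
  have hexp_eq : exp (-t * -a) = exp (-a * Real.log r) := by
    congr 1; rw [ht]; ring
  rw [hexp_eq] at key
  rw [ENNReal.le_ofReal_iff_toReal_le (measure_ne_top _ _) (exp_pos _).le]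
  have hset : {ω | (∑ i, X i ω) - (∑ i, Y i ω) ≤ -a} = {ω | (∑ j, Z j) ω ≤ -a} := by
    rw [hsum]
  rw [hset]
  exact key
end

section
/- Let n be a natural number, 0 < q < p < 1, let X₁, …, Xₙ be i.i.d. Bernoulli(p) and Y₁, …, Yₙ be i.i.d. Bernoulli(q), with all of X₁, …, Xₙ, Y₁, …, Yₙ mutually independent. Then for every real c > 0, P(Σᵢ Xᵢ − Σᵢ Yᵢ ≤ −c·n·(p−q)) ≤ exp(−c·n·(KL(p,q) + KL(q,p))). -/
open MeasureTheory ProbabilityTheory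

section Aux

variable {Ω : Type*} [MeasureSpace Ω] [IsProbabilityMeasure (ℙ : Measure Ω)]

lemma bernoulli_exp_eq_s13 (t : ℝ) {Z : Ω → ℝ} (h01 : ∀ ω, Z ω = 0 ∨ Z ω = 1) (ω : Ω) :
    Real.exp (t * Z ω) = (Real.exp t - 1) * Z ω + 1 := by
  rcases h01 ω with h | h <;> simp [h]

lemma bernoulli_integrable_Z {Z : Ω → ℝ} (hm : Measurable Z)
    (h01 : ∀ ω, Z ω = 0 ∨ Z ω = 1) : Integrable Z ℙ := by
  have hs : MeasurableSet {ω | Z ω = 1} := hm (measurableSet_singleton 1)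
  have hZeq : Z = Set.indicator {ω | Z ω = 1} (fun _ => (1 : ℝ)) := by
    funext ω
    rcases h01 ω with h | h
    · rw [h, Set.indicator_of_notMem]
      simp [Set.mem_setOf_eq, h]
    · rw [h, Set.indicator_of_mem]
      exact h
  rw [hZeq]
  exact (integrable_const (1 : ℝ)).indicator hs

lemma bernoulli_integral_Z {Z : Ω → ℝ} (hm : Measurable Z)
    (h01 : ∀ ω, Z ω = 0 ∨ Z ω = 1) {r : ℝ} (hr : 0 ≤ r)
    (hZr : ℙ {ω | Z ω = 1} = ENNReal.ofReal r) :
    ∫ ω, Z ω ∂ℙ = r := by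
  have hs : MeasurableSet {ω | Z ω = 1} := hm (measurableSet_singleton 1)
  have hZeq : Z = Set.indicator {ω | Z ω = 1} (fun _ => (1 : ℝ)) := by
    funext ω
    rcases h01 ω with h | h
    · rw [h, Set.indicator_of_notMem]
      simp [Set.mem_setOf_eq, h]
    · rw [h, Set.indicator_of_mem]
      exact h
  rw [show (fun ω => Z ω) = Z from rfl, hZeq, integral_indicator_const _ hs, measureReal_def, hZr,
    ENNReal.toReal_ofReal hr]
  simp

lemma bernoulli_integrable_exp (t : ℝ) {Z : Ω → ℝ} (hm : Measurable Z)
    (h01 : ∀ ω, Z ω = 0 ∨ Z ω = 1) :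
    Integrable (fun ω => Real.exp (t * Z ω)) ℙ := by
  have : (fun ω => Real.exp (t * Z ω)) = fun ω => (Real.exp t - 1) * Z ω + 1 := by
    funext ω; exact bernoulli_exp_eq_s13 t h01 ω
  rw [this]
  exact (((bernoulli_integrable_Z hm h01).const_mul _).add (integrable_const 1))

lemma bernoulli_mgf_s13 (t : ℝ) {Z : Ω → ℝ} (hm : Measurable Z)
    (h01 : ∀ ω, Z ω = 0 ∨ Z ω = 1) {r : ℝ} (hr : 0 ≤ r)
    (hZr : ℙ {ω | Z ω = 1} = ENNReal.ofReal r) :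
    mgf Z ℙ t = r * Real.exp t + (1 - r) := by
  have hInt := bernoulli_integrable_Z hm h01
  have : (fun ω => Real.exp (t * Z ω)) = fun ω => (Real.exp t - 1) * Z ω + 1 := by
    funext ω; exact bernoulli_exp_eq_s13 t h01 ω
  rw [mgf, this, integral_add ((hInt.const_mul _)) (integrable_const 1),
    integral_const_mul, bernoulli_integral_Z hm h01 hr hZr, integral_const]
  simp [measure_univ]
  ring

end Aux

/-- For mutually independent `X₁,…,Xₙ` i.i.d. Bernoulli(p) and `Y₁,…,Yₙ` i.i.d. Bernoulli(q)
with `q < p`, for every `c > 0`,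
`P(Σ Xᵢ − Σ Yᵢ ≤ −c·n·(p−q)) ≤ exp(−c·n·(KL(p,q) + KL(q,p)))`. -/
theorem chernoff_diff_bernoulli_KL
    {Ω : Type*} [MeasureSpace Ω] [IsProbabilityMeasure (ℙ : Measure Ω)]
    (n : ℕ) (p q : ℝ) (hq0 : 0 < q) (hqp : q < p) (hp1 : p < 1)
    (X Y : Fin n → Ω → ℝ)
    (hXm : ∀ i, Measurable (X i)) (hYm : ∀ i, Measurable (Y i))
    (hX01 : ∀ i ω, X i ω = 0 ∨ X i ω = 1) (hY01 : ∀ i ω, Y i ω = 0 ∨ Y i ω = 1)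
    (hXp : ∀ i, ℙ {ω | X i ω = 1} = ENNReal.ofReal p)
    (hYq : ∀ i, ℙ {ω | Y i ω = 1} = ENNReal.ofReal q)
    (hindep : iIndepFun (Sum.elim X Y) ℙ) :
    ∀ c : ℝ, 0 < c →
      ℙ {ω | (∑ i, X i ω) - (∑ i, Y i ω) ≤ -(c * n * (p - q))}
        ≤ ENNReal.ofReal (Real.exp (-(c * n * (KL p q + KL q p)))) := by
  intro c hc
  have hp0 : 0 < p := hq0.trans hqp
  have hq1 : q < 1 := hqp.trans hp1
  have h1p : 0 < 1 - p := by linarith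
  have h1q : 0 < 1 - q := by linarith
  set L : ℝ := Real.log (p * (1 - q) / (q * (1 - p))) with hL
  have hargpos : 0 < p * (1 - q) / (q * (1 - p)) := by positivity
  have harg : 1 < p * (1 - q) / (q * (1 - p)) := by
    rw [lt_div_iff₀ (by positivity)]
    nlinarith
  have hLpos : 0 < L := Real.log_pos harg
  have hexpL : Real.exp L = p * (1 - q) / (q * (1 - p)) := Real.exp_log hargpos
  have hexpnegL : Real.exp (-L) = q * (1 - p) / (p * (1 - q)) := by
    rw [Real.exp_neg, hexpL, inv_div]
  -- the combined family
  set g : (Fin n ⊕ Fin n) → ℝ → ℝ := Sum.elim (fun _ => id) (fun _ => Neg.neg) with hg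
  set W : (Fin n ⊕ Fin n) → Ω → ℝ := fun j => g j ∘ Sum.elim X Y j with hW
  have hWinl : ∀ i, W (Sum.inl i) = X i := fun i => rfl
  have hWinr : ∀ i, W (Sum.inr i) = fun ω => -(Y i ω) := fun i => rfl
  have hWm : ∀ j, Measurable (W j) := by
    rintro (i | i)
    · exact hXm i
    · exact (hYm i).neg
  have hWindep : iIndepFun W ℙ := by
    refine hindep.comp g ?_
    rintro (i | i)
    · exact measurable_id
    · exact measurable_neg
  -- sum
  have hSum : ∀ ω, (∑ j, W j) ω = (∑ i, X i ω) - (∑ i, Y i ω) := by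
    intro ω
    rw [Finset.sum_apply, Fintype.sum_sum_type]
    simp only [hWinl, hWinr]
    rw [sub_eq_add_neg, ← Finset.sum_neg_distrib]
  -- integrability of exp(-L * W j)
  have hWint : ∀ j, Integrable (fun ω => Real.exp (-L * W j ω)) ℙ := by
    rintro (i | i)
    · exact bernoulli_integrable_exp (-L) (hXm i) (hX01 i)
    · have : (fun ω => Real.exp (-L * W (Sum.inr i) ω)) =
          fun ω => Real.exp (L * Y i ω) := by
        funext ω; rw [hWinr]; ring_nf
      rw [this]
      exact bernoulli_integrable_exp L (hYm i) (hY01 i)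
  have hSint : Integrable (fun ω => Real.exp (-L * (∑ j, W j) ω)) ℙ := by
    exact hWindep.integrable_exp_mul_sum (t := -L) hWm
      (s := Finset.univ) (fun j _ => hWint j)
  -- mgf values
  have hmgfX : ∀ i, mgf (W (Sum.inl i)) ℙ (-L) = (1 - p) / (1 - q) := by
    intro i
    rw [hWinl, bernoulli_mgf_s13 (-L) (hXm i) (hX01 i) hp0.le (hXp i), hexpnegL]
    field_simp
    ring
  have hmgfY : ∀ i, mgf (W (Sum.inr i)) ℙ (-L) = (1 - q) / (1 - p) := by
    intro i
    have : W (Sum.inr i) = -(Y i) := rfl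
    rw [this, mgf_neg, neg_neg,
      bernoulli_mgf_s13 L (hYm i) (hY01 i) hq0.le (hYq i), hexpL]
    field_simp
    ring
  have hmgfS : mgf (∑ j, W j) ℙ (-L) = 1 := by
    rw [hWindep.mgf_sum hWm Finset.univ, Fintype.prod_sum_type]
    simp only [hmgfX, hmgfY, Finset.prod_const, Finset.card_univ, Fintype.card_fin]
    rw [← mul_pow, div_mul_div_comm, mul_comm (1 - p), div_self (by positivity), one_pow]
  -- Chernoff
  set ε : ℝ := -(c * n * (p - q)) with hε
  have hcher := measure_le_le_exp_mul_mgf (μ := ℙ) (X := ∑ j, W j) ε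
    (neg_nonpos_of_nonneg hLpos.le) hSint
  rw [hmgfS, mul_one, neg_neg] at hcher
  -- identify the KL combination
  have hKL : (p - q) * L = KL p q + KL q p := by
    rw [hL, KL, KL, Real.log_div (by positivity) (by positivity),
      Real.log_mul (by positivity) (by positivity),
      Real.log_mul (by positivity) (by positivity),
      Real.log_div hp0.ne' hq0.ne', Real.log_div h1p.ne' h1q.ne',
      Real.log_div hq0.ne' hp0.ne', Real.log_div h1q.ne' h1p.ne']
    ring
  have hrew : L * ε = -(c * n * (KL p q + KL q p)) := by
    rw [hε, ← hKL]; ring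
  rw [hrew] at hcher
  have hset : {ω | (∑ i, X i ω) - (∑ i, Y i ω) ≤ -(c * ↑n * (p - q))} =
      {ω | (∑ j, W j) ω ≤ ε} := by
    ext ω; simp only [Set.mem_setOf_eq, hSum, hε]
  rw [hset]
  rw [ENNReal.le_ofReal_iff_toReal_le (measure_ne_top _ _) (Real.exp_pos _).le]
  exact hcher
end

section
/- Let n and m be natural numbers with 1 ≤ m < n, let 0 < q < p and c > 0 be reals, and let M be the real n×n matrix with M_{ij} = c·p when i and j both lie in {1,…,m} or both lie in {m+1,…,n}, and M_{ij} = c·q otherwise. Set α = m/n and Δ = p² − 4α(1−α)(p² − q²). Then Δ ≥ q² > 0, the rank of M is at most 2, and the two numbers λ± = (c·n/2)·(p ± √Δ) are eigenvalues of M. -/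
lemma block_sum_aux (n m : ℕ) (hmn : m < n) (A B : ℝ) :
    ∑ j : Fin n, (if (j : ℕ) < m then A else B) = m * A + (n - m : ℕ) * B := by
  rw [Finset.sum_ite]
  have h1 : (Finset.univ.filter fun j : Fin n => (j : ℕ) < m).card = m := by
    have : (Finset.univ.filter fun j : Fin n => (j : ℕ) < m) =
        Finset.Iio (⟨m, hmn⟩ : Fin n) := by
      ext j; simp [Fin.lt_def]
    rw [this, Fin.card_Iio]
  have h2 : (Finset.univ.filter fun j : Fin n => ¬ (j : ℕ) < m).card = n - m := by
    have := Finset.card_filter_add_card_filter_not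
      (s := (Finset.univ : Finset (Fin n))) (p := fun j : Fin n => (j : ℕ) < m)
    simp only [Finset.card_univ, Fintype.card_fin] at this
    omega
  simp only [not_lt] at h2
  simp [h1, h2, Finset.sum_const, mul_comm]

lemma block_eigen_aux (n m : ℕ) (hm : 1 ≤ m) (hmn : m < n)
    (p q c : ℝ) (hq : 0 < q) (hc : 0 < c)
    (M : Matrix (Fin n) (Fin n) ℝ)
    (hM : ∀ i j : Fin n, M i j =
      if (i.val < m ∧ j.val < m) ∨ (m ≤ i.val ∧ m ≤ j.val) then c * p else c * q)
    (lam : ℝ)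
    (hlam : lam ^ 2 - c * p * n * lam + c ^ 2 * (p ^ 2 - q ^ 2) * m * (n - m) = 0) :
    ∃ x : Fin n → ℝ, x ≠ 0 ∧ M.mulVec x = lam • x := by
  have hnm : ((n - m : ℕ) : ℝ) = (n : ℝ) - m := by
    rw [Nat.cast_sub hmn.le]
  set a : ℝ := c * q * ((n : ℝ) - m) with ha
  set b : ℝ := lam - c * p * m with hb
  refine ⟨fun i => if (i : ℕ) < m then a else b, ?_, ?_⟩
  · intro h
    have h0 := congrFun h ⟨0, by omega⟩
    have hnm' : (0:ℝ) < (n : ℝ) - m := by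
      have : (m : ℝ) < n := by exact_mod_cast hmn
      linarith
    simp only [Fin.val_mk, hm, if_pos (by omega : (0:ℕ) < m)] at h0
    have : (0:ℝ) < a := by positivity
    simp [Pi.zero_apply] at h0
    linarith [h0]
  · funext i
    rw [Matrix.mulVec, dotProduct]
    by_cases hi : (i : ℕ) < m
    · have : ∀ j : Fin n, M i j * (if (j : ℕ) < m then a else b) =
          (if (j : ℕ) < m then c * p * a else c * q * b) := by
        intro j
        rw [hM]
        by_cases hj : (j : ℕ) < m <;> simp [hi, hj, not_lt.mp, *] <;> omega
      rw [Finset.sum_congr rfl fun j _ => this j, block_sum_aux n m hmn]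
      simp only [Pi.smul_apply, smul_eq_mul, if_pos hi, hnm]
      ring
    · have : ∀ j : Fin n, M i j * (if (j : ℕ) < m then a else b) =
          (if (j : ℕ) < m then c * q * a else c * p * b) := by
        intro j
        rw [hM]
        by_cases hj : (j : ℕ) < m <;> simp [hi, hj, not_lt.mp, *] <;> omega
      rw [Finset.sum_congr rfl fun j _ => this j, block_sum_aux n m hmn]
      simp only [Pi.smul_apply, smul_eq_mul, if_neg hi, hnm]
      -- need: m * (c*q*a) + (n-m) * (c*p*b) = lam * b
      rw [ha, hb]
      nlinarith [hlam]

/-- For the two-block matrix with diagonal-block entries `c·p` and off-diagonal-block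
entries `c·q`, the discriminant `Δ = p² − 4α(1−α)(p² − q²)` satisfies `Δ ≥ q² > 0`, the
rank of the matrix is at most 2, and `(c·n/2)·(p ± √Δ)` are eigenvalues. -/
theorem block_matrix_eigenvalues (n m : ℕ) (hm : 1 ≤ m) (hmn : m < n)
    (p q c : ℝ) (hq : 0 < q) (hqp : q < p) (hc : 0 < c)
    (M : Matrix (Fin n) (Fin n) ℝ)
    (hM : ∀ i j : Fin n, M i j =
      if (i.val < m ∧ j.val < m) ∨ (m ≤ i.val ∧ m ≤ j.val) then c * p else c * q)
    (α : ℝ) (hα : α = (m : ℝ) / n)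
    (Δ : ℝ) (hΔ : Δ = p ^ 2 - 4 * α * (1 - α) * (p ^ 2 - q ^ 2)) :
    Δ ≥ q ^ 2 ∧ q ^ 2 > 0 ∧ M.rank ≤ 2 ∧
    (∃ x : Fin n → ℝ, x ≠ 0 ∧
      M.mulVec x = ((c * n / 2) * (p + Real.sqrt Δ)) • x) ∧
    (∃ x : Fin n → ℝ, x ≠ 0 ∧
      M.mulVec x = ((c * n / 2) * (p - Real.sqrt Δ)) • x) := by
  have hn0 : (0:ℝ) < n := by
    have : 0 < n := by omega
    exact_mod_cast this
  have hpq : (0:ℝ) ≤ p ^ 2 - q ^ 2 := by nlinarith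
  have hΔq : Δ - q ^ 2 = (p ^ 2 - q ^ 2) * (1 - 2 * α) ^ 2 := by rw [hΔ]; ring
  have hΔge : Δ ≥ q ^ 2 := by nlinarith [mul_nonneg hpq (sq_nonneg (1 - 2 * α))]
  have hq2 : q ^ 2 > 0 := by positivity
  have hΔ0 : 0 ≤ Δ := le_trans hq2.le hΔge
  have hs : Real.sqrt Δ ^ 2 = Δ := Real.sq_sqrt hΔ0
  have hΔn : Δ * (n : ℝ) ^ 2 =
      p ^ 2 * (n : ℝ) ^ 2 - 4 * (m : ℝ) * ((n : ℝ) - m) * (p ^ 2 - q ^ 2) := by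
    rw [hΔ, hα]
    field_simp
  have key : ∀ s : ℝ, s ^ 2 = Δ →
      ((c * n / 2) * (p + s)) ^ 2 - c * p * n * ((c * n / 2) * (p + s)) +
        c ^ 2 * (p ^ 2 - q ^ 2) * m * ((n : ℝ) - m) = 0 := by
    intro s hs'
    linear_combination (c ^ 2 * (n : ℝ) ^ 2 / 4) * hs' + (c ^ 2 / 4) * hΔn
  refine ⟨hΔge, hq2, ?_, ?_, ?_⟩
  · -- rank ≤ 2
    classical
    set B : Matrix (Fin n) (Fin 2) ℝ := fun i k =>
      if (i : ℕ) < m then (if k = 0 then c * p else c * q)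
      else (if k = 0 then c * q else c * p) with hB
    set C : Matrix (Fin 2) (Fin n) ℝ := fun k j =>
      if ((j : ℕ) < m ↔ k = 0) then 1 else 0 with hC
    have hMBC : M = B * C := by
      ext i j
      rw [Matrix.mul_apply, Fin.sum_univ_two, hM]
      by_cases hi : (i : ℕ) < m <;> by_cases hj : (j : ℕ) < m <;>
        simp [hB, hC, hi, hj] <;> omega
    calc M.rank = (B * C).rank := by rw [hMBC]
      _ ≤ B.rank := Matrix.rank_mul_le_left B C
      _ ≤ Fintype.card (Fin 2) := Matrix.rank_le_card_width B
      _ = 2 := by simp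
  · exact block_eigen_aux n m hm hmn p q c hq hc M hM _
      (key (Real.sqrt Δ) hs)
  · have h2 : (- Real.sqrt Δ) ^ 2 = Δ := by rw [neg_pow]; simpa using hs
    have := key (- Real.sqrt Δ) h2
    rw [show p + - Real.sqrt Δ = p - Real.sqrt Δ by ring] at this
    exact block_eigen_aux n m hm hmn p q c hq hc M hM _ this
end
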